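/- arXiv:1409.6172 — 8 statements merged into one kernel-verified Lean document; each statement's English description precedes it below -/
import Mathlib

section
/- In a finite game tree with strict preferences, at any step of the PPE construction, the outcome in the set of non-discarded outcomes that gives the highest payoff to the current player can never be discarded by any Newcombian State. Hence the set of remaining outcomes after the discarding process at any node is non-empty. -/
open Classical

section PPE

variable {O C : Type*} [Fintype O] [DecidableEq O] [DecidableEq C]

/-- Target set of a Newcombian State (a list of children of the current node),
defined recursively from the remaining-outcome set `I`, the descendant map `D`
and the current player's payoff `pay`. -/
noncomputable def target (I : Finset O) (D : C → Finset O) (pay : O → ℤ) :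
    List C → Finset O
  | [] => ∅
  | [n] => I ∩ D n
  | n :: m :: p =>
      let Tp := target I D pay (m :: p)
      (I ∩ D n).filter (fun o => ¬ (Tp.Nonempty ∧ ∀ o' ∈ Tp, pay o < pay o'))

/-- A Newcombian State at the current node: a nonempty list of children with no
two consecutive elements equal. -/
def ValidState (F : Finset C) (η : List C) : Prop :=
  η ≠ [] ∧ (∀ n ∈ η, n ∈ F) ∧ η.Chain' (· ≠ ·)

/-- `o` is discarded by some Newcombian State at the current node. -/
def Discards (I : Finset O) (D : C → Finset O) (pay : O → ℤ) (F : Finset C)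
    (o : O) : Prop :=
  ∃ n p, ValidState F (n :: p) ∧ o ∈ I ∧ o ∉ D n ∧
    (target I D pay (n :: p)).Nonempty ∧
    ∀ o' ∈ target I D pay (n :: p), pay o < pay o'

/-- The set of outcomes remaining after the discarding process at the current node. -/
noncomputable def survivors (I : Finset O) (D : C → Finset O) (pay : O → ℤ)
    (F : Finset C) : Finset O :=
  I.filter (fun o => ¬ Discards I D pay F o)

/-- Worst payoff of a Newcombian State. -/
noncomputable def wp (I : Finset O) (D : C → Finset O) (pay : O → ℤ)
    (η : List C) : ℤ :=
  sInf (pay '' (target I D pay η : Set O))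

end PPE

theorem target_subset {O C : Type*} [Fintype O] [DecidableEq O] [DecidableEq C]
    (I : Finset O) (D : C → Finset O) (pay : O → ℤ) :
    ∀ η : List C, target I D pay η ⊆ I
  | [] => by simp [target]
  | [n] => by simp [target, Finset.inter_subset_left]
  | n :: m :: p => by
    intro o ho
    simp only [target, Finset.mem_filter, Finset.mem_inter] at ho
    exact ho.1.1

/-- the outcome of `I` with the highest payoff for the current
player can never be discarded by any Newcombian State; hence the set of
remaining outcomes after the discarding process is non-empty. -/
theorem ppe_best_outcome_never_discarded
    {O C : Type*} [Fintype O] [DecidableEq O] [DecidableEq C]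
    (I : Finset O) (D : C → Finset O) (pay : O → ℤ) (F : Finset C)
    (hI : I.Nonempty)
    (hcov : ∀ o ∈ I, ∃ c ∈ F, o ∈ D c)
    (hdisj : ∀ c c' : C, c ≠ c' → Disjoint (D c) (D c'))
    (hpay : Function.Injective pay) :
    (∀ omax ∈ I, (∀ o ∈ I, pay o ≤ pay omax) → ¬ Discards I D pay F omax) ∧
    (survivors I D pay F).Nonempty := by
  have key : ∀ omax ∈ I, (∀ o ∈ I, pay o ≤ pay omax) → ¬ Discards I D pay F omax := by
    intro omax hmem hmax hd
    obtain ⟨n, p, _, _, _, ⟨o', ho'⟩, hlt⟩ := hd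
    exact absurd (hmax o' (target_subset I D pay (n :: p) ho')) (not_le.mpr (hlt o' ho'))
  refine ⟨key, ?_⟩
  obtain ⟨omax, hmem, hmax⟩ := I.exists_max_image pay hI
  exact ⟨omax, Finset.mem_filter.mpr ⟨hmem, key omax hmem hmax⟩⟩
end

section
/- In a finite game tree with strict preferences, the Perfect Prediction Equilibrium exists and is unique: the iterative process of discarding outcomes at successive nodes (starting at the root, moving at each step to the unique child containing all remaining outcomes) terminates with exactly one outcome. -/
open Classical

/-- A finite two-player extensive-form game tree with perfect information:
leaves carry a pair of payoffs (Peter's, Mary's); internal nodes carry the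
player to move (`true` = Peter, `false` = Mary) and a list of children. -/
inductive GameTree where
  | leaf (pP pM : ℤ) : GameTree
  | node (player : Bool) (children : List GameTree) : GameTree

namespace GameTree

/-- The list of outcomes (leaf payoff pairs) of a game tree. -/
def outcomes : GameTree → List (ℤ × ℤ)
  | .leaf p m => [(p, m)]
  | .node _ ts => ts.attach.flatMap (fun t => outcomes t.1)
decreasing_by
  have := List.sizeOf_lt_of_mem t.2
  simp only [GameTree.node.sizeOf_spec]
  omega

/-- The payoff of a given player at an outcome. -/
def payOf (pl : Bool) (o : ℤ × ℤ) : ℤ := if pl then o.1 else o.2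

/-- Every internal node has a nonempty list of children. -/
def WellFormed : GameTree → Prop
  | .leaf _ _ => True
  | .node _ ts => ts ≠ [] ∧ ∀ t ∈ ts.attach, WellFormed t.1
decreasing_by
  have := List.sizeOf_lt_of_mem t.2
  simp only [GameTree.node.sizeOf_spec]
  omega

/-- Strict preferences: each player's payoffs at the outcomes are pairwise
distinct. -/
def StrictPref (g : GameTree) : Prop :=
  (g.outcomes.map Prod.fst).Nodup ∧ (g.outcomes.map Prod.snd).Nodup

/-- Target set of a Newcombian State (a list of children subtrees) with respect
to the current player's payoff `pay` and the remaining-outcome set `I`. -/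
noncomputable def target (pay : ℤ × ℤ → ℤ) (I : Finset (ℤ × ℤ)) :
    List GameTree → Finset (ℤ × ℤ)
  | [] => ∅
  | [t] => I ∩ t.outcomes.toFinset
  | t :: u :: p =>
      let Tp := target pay I (u :: p)
      (I ∩ t.outcomes.toFinset).filter
        (fun o => ¬ (Tp.Nonempty ∧ ∀ o' ∈ Tp, pay o < pay o'))

/-- `o` is discarded by some Newcombian State at a node with children `ts`,
remaining set `I` and current-player payoff `pay`. -/
def Discards (pay : ℤ × ℤ → ℤ) (ts : List GameTree) (I : Finset (ℤ × ℤ))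
    (o : ℤ × ℤ) : Prop :=
  ∃ η : List GameTree, η ≠ [] ∧ (∀ t ∈ η, t ∈ ts) ∧ η.Chain' (· ≠ ·) ∧
    o ∈ I ∧ (∀ t ∈ η.head?, o ∉ t.outcomes.toFinset) ∧
    (target pay I η).Nonempty ∧
    ∀ o' ∈ target pay I η, pay o < pay o'

/-- The set of outcomes surviving all Newcombian-State discardings at a node. -/
noncomputable def survivors (pay : ℤ × ℤ → ℤ) (ts : List GameTree)
    (I : Finset (ℤ × ℤ)) : Finset (ℤ × ℤ) :=
  I.filter (fun o => ¬ Discards pay ts I o)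

/-- The Perfect Prediction Equilibrium construction: starting from the root
with remaining set `I`, at each node discard all outcomes discarded by some
Newcombian State, then move to the unique child whose outcomes contain all
remaining outcomes; the reached leaf is the PPE outcome. -/
inductive PPEReach : GameTree → Finset (ℤ × ℤ) → (ℤ × ℤ) → Prop
  | leaf (p m : ℤ) (I : Finset (ℤ × ℤ)) (h : (p, m) ∈ I) :
      PPEReach (.leaf p m) I (p, m)
  | node (pl : Bool) (ts : List GameTree) (I : Finset (ℤ × ℤ))
      (t : GameTree) (o : ℤ × ℤ) (ht : t ∈ ts)
      (hsub : survivors (payOf pl) ts I ⊆ t.outcomes.toFinset)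
      (hrec : PPEReach t (survivors (payOf pl) ts I) o) :
      PPEReach (.node pl ts) I o

/-- Backward induction (Subgame Perfect Equilibrium) outcome: at each node the
current player moves to the child whose backward-induction outcome maximizes
her payoff. -/
noncomputable def biOutcome : GameTree → ℤ × ℤ
  | .leaf p m => (p, m)
  | .node pl ts =>
      ((ts.attach.map (fun t => biOutcome t.1)).argmax (payOf pl)).getD (0, 0)
decreasing_by
  have := List.sizeOf_lt_of_mem t.2
  simp only [GameTree.node.sizeOf_spec]
  omega


lemma outcomes_node (pl : Bool) (ts : List GameTree) :
    (GameTree.node pl ts).outcomes = ts.flatMap outcomes := by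
  rw [outcomes, ← List.flatMap_map (Subtype.val) outcomes ts.attach,
    List.attach_map_subtype_val]

lemma mem_outcomes_node {pl : Bool} {ts : List GameTree} {x : ℤ × ℤ} :
    x ∈ (GameTree.node pl ts).outcomes ↔ ∃ t ∈ ts, x ∈ t.outcomes := by
  rw [outcomes_node, List.mem_flatMap]

lemma sublist_flatMap_of_mem {α β : Type*} (f : α → List β) :
    ∀ {l : List α} {a : α}, a ∈ l → (f a).Sublist (l.flatMap f)
  | b :: l, a, h => by
    rw [List.flatMap_cons]
    rcases List.mem_cons.1 h with rfl | h
    · exact List.sublist_append_left _ _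
    · exact (sublist_flatMap_of_mem f h).trans (List.sublist_append_right _ _)

lemma strictPref_child {pl : Bool} {ts : List GameTree}
    (hsp : (GameTree.node pl ts).StrictPref) {t : GameTree} (ht : t ∈ ts) :
    t.StrictPref := by
  have h := sublist_flatMap_of_mem outcomes ht
  rw [← outcomes_node pl ts] at h
  exact ⟨List.Nodup.sublist (h.map _) hsp.1, List.Nodup.sublist (h.map _) hsp.2⟩

lemma pay_inj {g : GameTree} (hsp : g.StrictPref) (pl : Bool) {x y : ℤ × ℤ}
    (hx : x ∈ g.outcomes) (hy : y ∈ g.outcomes) (h : payOf pl x = payOf pl y) :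
    x = y := by
  cases pl
  · exact List.inj_on_of_nodup_map hsp.2 hx hy (by simpa [payOf] using h)
  · exact List.inj_on_of_nodup_map hsp.1 hx hy (by simpa [payOf] using h)

lemma child_eq_aux : ∀ (l : List GameTree),
    (l.flatMap (fun s => s.outcomes.map Prod.fst)).Nodup →
    ∀ (t : GameTree), t ∈ l → ∀ (t' : GameTree), t' ∈ l → ∀ (x : ℤ × ℤ),
      x ∈ t.outcomes → x ∈ t'.outcomes → t = t'
  | [], _, _, ht, _, _, _, _, _ => absurd ht List.not_mem_nil
  | s :: l, hnd, t, ht, t', ht', x, hx, hx' => by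
    rw [List.flatMap_cons, List.nodup_append] at hnd
    rcases List.mem_cons.1 ht with h1 | h1
    · rcases List.mem_cons.1 ht' with h2 | h2
      · rw [h1, h2]
      · exact (hnd.2.2 _ (List.mem_map_of_mem (h1 ▸ hx))
          _ (List.mem_flatMap.2 ⟨t', h2, List.mem_map_of_mem hx'⟩) rfl).elim
    · rcases List.mem_cons.1 ht' with h2 | h2
      · exact (hnd.2.2 _ (List.mem_map_of_mem (h2 ▸ hx'))
          _ (List.mem_flatMap.2 ⟨t, h1, List.mem_map_of_mem hx⟩) rfl).elim
      · exact child_eq_aux l hnd.2.1 t h1 t' h2 x hx hx'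

lemma child_eq {pl : Bool} {ts : List GameTree}
    (hsp : (GameTree.node pl ts).StrictPref) {t t' : GameTree}
    (ht : t ∈ ts) (ht' : t' ∈ ts) {x : ℤ × ℤ}
    (hx : x ∈ t.outcomes) (hx' : x ∈ t'.outcomes) : t = t' := by
  have h := hsp.1
  rw [outcomes_node, List.map_flatMap] at h
  exact child_eq_aux ts h t ht t' ht' x hx hx'

lemma target_subset (pay : ℤ × ℤ → ℤ) (I : Finset (ℤ × ℤ)) :
    ∀ η, target pay I η ⊆ I
  | [] => by simp [target]
  | [t] => by
      simp only [target]; exact Finset.inter_subset_left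
  | t :: u :: p => by
      simp only [target]
      exact (Finset.filter_subset _ _).trans Finset.inter_subset_left


lemma climb {pl : Bool} {ts : List GameTree} {I : Finset (ℤ × ℤ)}
    (hsp : (GameTree.node pl ts).StrictPref)
    (hI : ∀ x ∈ I, x ∈ (GameTree.node pl ts).outcomes) :
    ∀ n : ℕ, ∀ b ∈ I,
      (I.filter (fun z => payOf pl z < payOf pl b)).card ≤ n →
      ∀ t ∈ ts, b ∈ t.outcomes →
      ∃ η : List GameTree, η ≠ [] ∧ (∀ s ∈ η, s ∈ ts) ∧ η.Chain' (· ≠ ·) ∧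
        η.head? = some t ∧ b ∈ target (payOf pl) I η ∧
        ∀ x ∈ target (payOf pl) I η, x ∈ t.outcomes ∧
          ∀ y ∈ I, y ∉ t.outcomes → payOf pl y < payOf pl b →
            payOf pl y < payOf pl x := by
  classical
  intro n
  induction n using Nat.strong_induction_on with
  | _ n ih =>
  intro b hbI hcard t ht hbt
  by_cases hB : ∃ y ∈ I, y ∉ t.outcomes ∧ payOf pl y < payOf pl b
  · -- inductive step
    obtain ⟨y₀, hy₀B, hy₀max⟩ :=
      (I.filter (fun y => y ∉ t.outcomes ∧ payOf pl y < payOf pl b)).exists_max_image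
        (payOf pl) (by
          obtain ⟨y, hyI, h1, h2⟩ := hB
          exact ⟨y, Finset.mem_filter.2 ⟨hyI, h1, h2⟩⟩)
    rw [Finset.mem_filter] at hy₀B
    obtain ⟨hy₀I, hy₀t, hy₀b⟩ := hy₀B
    obtain ⟨t', ht', hy₀t'⟩ := GameTree.mem_outcomes_node.1 (hI y₀ hy₀I)
    have hcard' : (I.filter (fun z => payOf pl z < payOf pl y₀)).card < n := by
      have hss : I.filter (fun z => payOf pl z < payOf pl y₀) ⊂
          I.filter (fun z => payOf pl z < payOf pl b) := by
        refine (Finset.ssubset_iff_of_subset ?_).2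
          ⟨y₀, Finset.mem_filter.2 ⟨hy₀I, hy₀b⟩,
            fun hc => lt_irrefl _ (Finset.mem_filter.1 hc).2⟩
        intro z hz
        rw [Finset.mem_filter] at hz ⊢
        exact ⟨hz.1, hz.2.trans hy₀b⟩
      exact lt_of_lt_of_le (Finset.card_lt_card hss) hcard
    obtain ⟨η₀, hη₀ne, hη₀mem, hη₀ch, hη₀head, hbη₀, hprop₀⟩ :=
      ih _ hcard' y₀ hy₀I le_rfl t' ht' hy₀t'
    cases η₀ with
    | nil => exact absurd rfl hη₀ne
    | cons h0 tl =>
    have hh0 : t' = h0 := by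
      have := hη₀head
      simp only [List.head?_cons, Option.some.injEq] at this
      exact this.symm
    subst hh0
    have htt' : t ≠ t' := fun h => hy₀t (h ▸ hy₀t')
    refine ⟨t :: t' :: tl, by simp, ?_, List.isChain_cons_cons.2 ⟨htt', hη₀ch⟩, rfl, ?_, ?_⟩
    · intro s hs
      rcases List.mem_cons.1 hs with rfl | hs
      · exact ht
      · exact hη₀mem s hs
    · -- b ∈ target
      simp only [target, Finset.mem_filter, Finset.mem_inter,
        List.mem_toFinset]
      exact ⟨⟨hbI, hbt⟩, fun h =>
        absurd (h.2 y₀ hbη₀) (not_lt.2 hy₀b.le)⟩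
    · intro x hx
      simp only [target, Finset.mem_filter, Finset.mem_inter,
        List.mem_toFinset] at hx
      obtain ⟨⟨hxI, hxt⟩, hnotdom⟩ := hx
      refine ⟨hxt, ?_⟩
      have hz : ∃ z ∈ target (payOf pl) I (t' :: tl),
          payOf pl z ≤ payOf pl x := by
        by_contra hc
        push_neg at hc
        exact hnotdom ⟨⟨y₀, hbη₀⟩, fun o' ho' => hc o' ho'⟩
      obtain ⟨z, hzT, hzx⟩ := hz
      intro y hyI hyt hyb
      have hy_le : payOf pl y ≤ payOf pl y₀ :=
        hy₀max y (Finset.mem_filter.2 ⟨hyI, hyt, hyb⟩)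
      rcases lt_or_ge (payOf pl y₀) (payOf pl x) with h | h
      · exact lt_of_le_of_lt hy_le h
      · exfalso
        have hxney₀ : x ≠ y₀ := fun h => hy₀t (h ▸ hxt)
        have hxlt : payOf pl x < payOf pl y₀ :=
          lt_of_le_of_ne h (fun h' =>
            hxney₀ (GameTree.pay_inj hsp pl (hI x hxI) (hI y₀ hy₀I) h'))
        have hxt' : x ∉ t'.outcomes := fun hc =>
          htt' (GameTree.child_eq hsp ht ht' hxt hc)
        have := (hprop₀ z hzT).2 x hxI hxt' hxlt
        omega
  · -- base case: singleton chain
    push_neg at hB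
    have htar : target (payOf pl) I [t] = I ∩ t.outcomes.toFinset := by
      simp [target]
    refine ⟨[t], by simp, by simpa using ht, List.isChain_singleton _, rfl, ?_, ?_⟩
    · rw [htar]
      exact Finset.mem_inter.2 ⟨hbI, List.mem_toFinset.2 hbt⟩
    · intro x hx
      rw [htar, Finset.mem_inter, List.mem_toFinset] at hx
      exact ⟨hx.2, fun y hyI hyt hyb => absurd hyb (not_lt.2 (hB y hyI hyt))⟩

lemma outcomes_ne_nil (n : ℕ) : ∀ g : GameTree, sizeOf g ≤ n → g.WellFormed →
    g.outcomes ≠ [] := by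
  induction n using Nat.strong_induction_on with
  | _ n ih =>
  intro g hsz hwf
  cases g with
  | leaf p m => simp [outcomes]
  | node pl ts =>
    rw [WellFormed] at hwf
    have hwf' := hwf
    rw [outcomes_node]
    cases ts with
    | nil => exact absurd rfl hwf'.1
    | cons t ts' =>
      have ht : t ∈ t :: ts' := List.mem_cons_self
      have hlt : sizeOf t < sizeOf (GameTree.node pl (t :: ts')) := by
        have := List.sizeOf_lt_of_mem ht
        simp only [GameTree.node.sizeOf_spec]
        omega
      have hne := ih (sizeOf t) (lt_of_lt_of_le hlt hsz) t le_rfl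
        (hwf'.2 ⟨t, ht⟩ (List.mem_attach _ _))
      rw [List.flatMap_cons]
      intro h
      exact hne (List.append_eq_nil_iff.1 h).1

lemma main (n : ℕ) : ∀ g : GameTree, sizeOf g ≤ n → g.WellFormed → g.StrictPref →
    ∀ I : Finset (ℤ × ℤ), (∀ x ∈ I, x ∈ g.outcomes) → I.Nonempty →
    ∃! o : ℤ × ℤ, PPEReach g I o := by
  classical
  induction n using Nat.strong_induction_on with
  | _ n ih =>
  intro g hsz hwf hsp I hI hne
  cases g with
  | leaf p m =>
    have hpm : (p, m) ∈ I := by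
      obtain ⟨x, hx⟩ := hne
      have hx' := hI x hx
      simp only [outcomes, List.mem_singleton] at hx'
      exact hx' ▸ hx
    exact ⟨(p, m), PPEReach.leaf p m I hpm, fun o ho => by cases ho; rfl⟩
  | node pl ts =>
    obtain ⟨os, hosI, hosmax⟩ := I.exists_max_image (payOf pl) hne
    obtain ⟨tstar, htstar, host⟩ := mem_outcomes_node.1 (hI os hosI)
    have hos_surv : os ∈ survivors (payOf pl) ts I := by
      rw [survivors, Finset.mem_filter]
      refine ⟨hosI, ?_⟩
      rintro ⟨η, -, -, -, -, -, ⟨w, hw⟩, hall⟩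
      exact absurd (hall w hw) (not_lt.2 (hosmax w (target_subset _ _ _ hw)))
    have hsub : survivors (payOf pl) ts I ⊆ tstar.outcomes.toFinset := by
      intro o ho
      rw [survivors, Finset.mem_filter] at ho
      obtain ⟨hoI, hnd⟩ := ho
      by_contra hnot
      rw [List.mem_toFinset] at hnot
      have honeos : o ≠ os := fun h => hnot (by rw [h]; exact host)
      have holt : payOf pl o < payOf pl os :=
        lt_of_le_of_ne (hosmax o hoI)
          (fun h => honeos (pay_inj hsp pl (hI o hoI) (hI os hosI) h))
      obtain ⟨η, hηne, hηmem, hηch, hηhead, hbη, hprop⟩ :=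
        climb hsp hI _ os hosI le_rfl tstar htstar host
      refine hnd ⟨η, hηne, hηmem, hηch, hoI, ?_, ⟨os, hbη⟩,
        fun x hx => (hprop x hx).2 o hoI hnot holt⟩
      intro s hs
      rw [hηhead, Option.mem_def, Option.some.injEq] at hs
      subst hs
      rw [List.mem_toFinset]
      exact hnot
    have hts_lt : sizeOf tstar < sizeOf (GameTree.node pl ts) := by
      have := List.sizeOf_lt_of_mem htstar
      simp only [GameTree.node.sizeOf_spec]
      omega
    rw [WellFormed] at hwf
    have hwf' : tstar.WellFormed := hwf.2 ⟨tstar, htstar⟩ (List.mem_attach _ _)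
    obtain ⟨o, ho, huniq⟩ := ih (sizeOf tstar) (lt_of_lt_of_le hts_lt hsz) tstar
      le_rfl hwf' (strictPref_child hsp htstar) (survivors (payOf pl) ts I)
      (fun x hx => List.mem_toFinset.1 (hsub hx)) ⟨os, hos_surv⟩
    refine ⟨o, PPEReach.node pl ts I tstar o htstar hsub ho, ?_⟩
    intro o' ho'
    cases ho' with
    | node _ _ _ t₂ _ ht₂ hsub₂ hrec₂ =>
      have ht2 : t₂ = tstar :=
        child_eq hsp ht₂ htstar (List.mem_toFinset.1 (hsub₂ hos_surv)) host
      exact huniq o' (ht2 ▸ hrec₂)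

end GameTree


/-- existence and uniqueness of the Perfect Prediction Equilibrium:
the iterative discarding process starting at the root terminates with exactly
one outcome. -/
theorem ppe_exists_unique (g : GameTree) (hwf : g.WellFormed)
    (hsp : g.StrictPref) :
    ∃! o : ℤ × ℤ, GameTree.PPEReach g g.outcomes.toFinset o := by
  have hne : g.outcomes.toFinset.Nonempty := by
    have h := GameTree.outcomes_ne_nil (sizeOf g) g le_rfl hwf
    cases hc : g.outcomes with
    | nil => exact absurd hc h
    | cons a l => exact ⟨a, by simp [hc]⟩
  exact GameTree.main (sizeOf g) g le_rfl hwf hsp g.outcomes.toFinset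
    (fun x hx => List.mem_toFinset.1 hx) hne
end

section
/- At any step of the PPE construction, there exists a unique best Newcombian Class η* such that for every child n of the current node other than the pure part of η*, the state (n, η*) has empty target set (i.e., η* discards all outcomes targeted by the siblings of its pure part). -/
open Classical

section Aux

set_option linter.unusedSectionVars false

variable {O C : Type*} [Fintype O] [DecidableEq O] [DecidableEq C]
variable (I : Finset O) (D : C → Finset O) (pay : O → ℤ)

lemma target_single (n : C) : target I D pay [n] = I ∩ D n := rfl

lemma target_cons (n m : C) (p : List C) :
    target I D pay (n :: m :: p) = (I ∩ D n).filter
      (fun o => ¬ ((target I D pay (m :: p)).Nonempty ∧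
        ∀ o' ∈ target I D pay (m :: p), pay o < pay o')) := rfl

lemma target_subset_s6 (n : C) (p : List C) :
    target I D pay (n :: p) ⊆ I ∩ D n := by
  cases p with
  | nil => rw [target_single]
  | cons m q => rw [target_cons]; exact Finset.filter_subset _ _

lemma mem_target_cons {o : O} (n m : C) (p : List C) :
    o ∈ target I D pay (n :: m :: p) ↔ (o ∈ I ∧ o ∈ D n) ∧
      ¬ ((target I D pay (m :: p)).Nonempty ∧
        ∀ o' ∈ target I D pay (m :: p), pay o < pay o') := by
  rw [target_cons, Finset.mem_filter, Finset.mem_inter]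

/-- Core construction: for every `o ∈ I` there is a valid state headed by the
child containing `o`, whose target contains `o` and dominates every outcome
outside that child with payoff below `pay o`. -/
lemma exists_good_state (F : Finset C)
    (hcov : ∀ o ∈ I, ∃ c ∈ F, o ∈ D c)
    (hdisj : ∀ c c' : C, c ≠ c' → Disjoint (D c) (D c'))
    (hpay : Function.Injective pay) :
    ∀ (k : ℕ), ∀ o ∈ I, (I.filter (fun x => pay x < pay o)).card ≤ k →
      ∃ n rest, n ∈ F ∧ o ∈ D n ∧ ValidState F (n :: rest) ∧
        o ∈ target I D pay (n :: rest) ∧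
        ∀ o'' ∈ I, o'' ∉ D n → pay o'' < pay o →
          ∀ o' ∈ target I D pay (n :: rest), pay o'' < pay o' := by
  classical
  intro k
  induction k with
  | zero =>
      intro o ho hcard
      obtain ⟨n, hnF, hoD⟩ := hcov o ho
      refine ⟨n, [], hnF, hoD, ⟨by simp, by simp [hnF], List.isChain_singleton n⟩, ?_, ?_⟩
      · rw [target_single, Finset.mem_inter]; exact ⟨ho, hoD⟩
      · intro o'' ho'' _ hlt _ _
        exfalso
        have : o'' ∈ I.filter (fun x => pay x < pay o) :=
          Finset.mem_filter.2 ⟨ho'', hlt⟩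
        have := Finset.card_pos.2 ⟨o'', this⟩
        omega
  | succ k ih =>
      intro o ho hcard
      obtain ⟨n, hnF, hoD⟩ := hcov o ho
      set S := I.filter (fun x => x ∉ D n ∧ pay x < pay o) with hS
      by_cases hSne : S.Nonempty
      · -- recursive case
        obtain ⟨b, hbS, hbmax⟩ := S.exists_max_image pay hSne
        have hbI : b ∈ I := (Finset.mem_filter.1 hbS).1
        have hbnD : b ∉ D n := (Finset.mem_filter.1 hbS).2.1
        have hblt : pay b < pay o := (Finset.mem_filter.1 hbS).2.2
        -- measure decreases
        have hmeas : (I.filter (fun x => pay x < pay b)).card ≤ k := by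
          have hsub1 : I.filter (fun x => pay x < pay b) ⊆
              I.filter (fun x => pay x < pay o) := by
            intro x hx
            rw [Finset.mem_filter] at hx ⊢
            exact ⟨hx.1, lt_trans hx.2 hblt⟩
          have hss : I.filter (fun x => pay x < pay b) ⊂
              I.filter (fun x => pay x < pay o) :=
            (Finset.ssubset_iff_of_subset hsub1).2
              ⟨b, Finset.mem_filter.2 ⟨hbI, hblt⟩, by simp⟩
          have := Finset.card_lt_card hss
          omega
        obtain ⟨m, restb, hmF, hbDm, hvb, hbT, hpropb⟩ := ih b hbI hmeas
        have hnm : n ≠ m := fun h => hbnD (h ▸ hbDm)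
        refine ⟨n, m :: restb, hnF, hoD, ?_, ?_, ?_⟩
        · -- validity
          obtain ⟨-, hmem, hchain⟩ := hvb
          exact ⟨by simp, by
            intro x hx
            rcases List.mem_cons.1 hx with h | h
            · exact h ▸ hnF
            · exact hmem x h, List.IsChain.cons_cons hnm hchain⟩
        · -- o in target
          rw [mem_target_cons]
          refine ⟨⟨ho, hoD⟩, ?_⟩
          rintro ⟨-, hall⟩
          exact absurd (hall b hbT) (not_lt.2 hblt.le)
        · -- domination property
          intro o'' ho'' ho''D hlt o' ho'
          have ho'mem := (mem_target_cons I D pay n m restb).1 ho'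
          have ho'I : o' ∈ I := ho'mem.1.1
          have ho'D : o' ∈ D n := ho'mem.1.2
          have hTne : (target I D pay (m :: restb)).Nonempty := ⟨b, hbT⟩
          have : ∃ t ∈ target I D pay (m :: restb), pay t ≤ pay o' := by
            by_contra hc
            push_neg at hc
            exact ho'mem.2 ⟨hTne, fun t ht => hc t ht⟩
          obtain ⟨t, htT, htle⟩ := this
          have hbo' : pay b < pay o' := by
            by_contra hc
            push_neg at hc
            have hne : o' ≠ b := fun h => hbnD (h ▸ ho'D)
            have h1 : pay o' < pay b :=
              lt_of_le_of_ne hc (fun h => hne (hpay h))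
            have ho'nDm : o' ∉ D m :=
              fun h => (hdisj n m hnm).forall_ne_finset ho'D h rfl
            exact absurd htle (not_le.2 (hpropb o' ho'I ho'nDm h1 t htT))
          have : pay o'' ≤ pay b :=
            hbmax o'' (Finset.mem_filter.2 ⟨ho'', ho''D, hlt⟩)
          omega
      · -- base-like case: nothing outside D n below o
        refine ⟨n, [], hnF, hoD, ⟨by simp, by simp [hnF], List.isChain_singleton n⟩, ?_, ?_⟩
        · rw [target_single, Finset.mem_inter]; exact ⟨ho, hoD⟩
        · intro o'' ho'' ho''D hlt
          exact absurd ⟨o'', Finset.mem_filter.2 ⟨ho'', ho''D, hlt⟩⟩ hSne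

end Aux


/-- existence and uniqueness (as a Newcombian Class, i.e. up to
target-equivalence) of the best Newcombian Class η*: for every child `n` other
than the pure part of η*, the state `(n, η*)` has empty target set. -/
theorem best_newcombian_class_exists_unique
    {O C : Type*} [Fintype O] [DecidableEq O] [DecidableEq C]
    (I : Finset O) (D : C → Finset O) (pay : O → ℤ) (F : Finset C)
    (hI : I.Nonempty)
    (hcov : ∀ o ∈ I, ∃ c ∈ F, o ∈ D c)
    (hdisj : ∀ c c' : C, c ≠ c' → Disjoint (D c) (D c'))
    (hpay : Function.Injective pay) :
    ∃ (n₀ : C) (rest : List C), ValidState F (n₀ :: rest) ∧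
      (∀ n ∈ F, n ≠ n₀ → target I D pay (n :: n₀ :: rest) = ∅) ∧
      ∀ (n₀' : C) (rest' : List C), ValidState F (n₀' :: rest') →
        (∀ n ∈ F, n ≠ n₀' → target I D pay (n :: n₀' :: rest') = ∅) →
        target I D pay (n₀' :: rest') = target I D pay (n₀ :: rest) := by
  classical
  obtain ⟨om, homI, homax⟩ := I.exists_max_image pay hI
  obtain ⟨n₀, rest, hn₀F, homD, hvalid, homT, hprop⟩ :=
    exists_good_state I D pay F hcov hdisj hpay
      (I.filter (fun x => pay x < pay om)).card om homI le_rfl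
  -- any outcome of I outside D n₀ pays strictly less than om
  have hlt_om : ∀ o'' ∈ I, o'' ∉ D n₀ → pay o'' < pay om := by
    intro o'' ho'' hD
    have hne : o'' ≠ om := fun h => hD (h ▸ homD)
    exact lt_of_le_of_ne (homax o'' ho'') (fun h => hne (hpay h))
  -- the sibling-empty property for our state
  have hempty : ∀ n ∈ F, n ≠ n₀ → target I D pay (n :: n₀ :: rest) = ∅ := by
    intro n hnF hne
    rw [Finset.eq_empty_iff_forall_notMem]
    intro x hx
    have hxmem := (mem_target_cons I D pay n n₀ rest).1 hx
    refine hxmem.2 ⟨⟨om, homT⟩, ?_⟩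
    intro t ht
    have hxnD : x ∉ D n₀ :=
      fun h => (hdisj n n₀ hne).forall_ne_finset hxmem.1.2 h rfl
    exact hprop x hxmem.1.1 hxnD (hlt_om x hxmem.1.1 hxnD) t ht
  -- canonical target set
  set B := I.filter (fun o => o ∈ D n₀ ∧ ∀ o'' ∈ I, o'' ∉ D n₀ → pay o'' < pay o)
    with hB
  -- any state with the sibling-empty property has target B
  have key : ∀ (n₀' : C) (rest' : List C), ValidState F (n₀' :: rest') →
      (∀ n ∈ F, n ≠ n₀' → target I D pay (n :: n₀' :: rest') = ∅) →
      target I D pay (n₀' :: rest') = B := by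
    intro n₀' rest' hval hemp
    by_cases hA : ∃ n ∈ F, n ≠ n₀' ∧ (I ∩ D n).Nonempty
    · obtain ⟨n, hnF, hne, w, hw⟩ := hA
      have hw' := Finset.mem_inter.1 hw
      -- w is filtered out of target (n :: n₀' :: rest'), so the target of
      -- (n₀' :: rest') is nonempty and dominates w
      have hwcond : (target I D pay (n₀' :: rest')).Nonempty ∧
          ∀ t ∈ target I D pay (n₀' :: rest'), pay w < pay t := by
        by_contra hc
        have : w ∈ target I D pay (n :: n₀' :: rest') :=
          (mem_target_cons I D pay n n₀' rest').2 ⟨⟨hw'.1, hw'.2⟩, hc⟩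
        rw [hemp n hnF hne] at this
        exact absurd this (Finset.notMem_empty w)
      have hT'ne := hwcond.1
      -- every outcome of I outside D n₀' is dominated by the whole target
      have hbig : ∀ x ∈ I, x ∉ D n₀' →
          ∀ t ∈ target I D pay (n₀' :: rest'), pay x < pay t := by
        intro x hxI hxD
        obtain ⟨c, hcF, hxc⟩ := hcov x hxI
        have hcne : c ≠ n₀' := fun h => hxD (h ▸ hxc)
        intro t ht
        by_contra hc
        have : x ∈ target I D pay (c :: n₀' :: rest') :=
          (mem_target_cons I D pay c n₀' rest').2
            ⟨⟨hxI, hxc⟩, fun hcond => hc (hcond.2 t ht)⟩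
        rw [hemp c hcF hcne] at this
        exact absurd this (Finset.notMem_empty x)
      -- om lies in D n₀', hence n₀' = n₀
      have homD' : om ∈ D n₀' := by
        by_contra hc
        obtain ⟨t, ht⟩ := hT'ne
        have h1 := hbig om homI hc t ht
        have h2 := homax t ((Finset.mem_inter.1 (target_subset_s6 I D pay n₀' rest' ht)).1)
        omega
      have heq : n₀' = n₀ := by
        by_contra hc
        exact (hdisj n₀' n₀ hc).forall_ne_finset homD' homD rfl
      subst heq
      -- target = B
      ext x
      constructor
      · intro hx
        have hx' := Finset.mem_inter.1 (target_subset_s6 I D pay n₀' rest' hx)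
        exact Finset.mem_filter.2 ⟨hx'.1, hx'.2,
          fun o'' ho'' hD => hbig o'' ho'' hD x hx⟩
      · intro hx
        obtain ⟨hxI, hxD, hxdom⟩ := Finset.mem_filter.1 hx
        cases rest' with
        | nil =>
            rw [target_single, Finset.mem_inter]; exact ⟨hxI, hxD⟩
        | cons m p =>
            have hmne : n₀' ≠ m := hval.2.2.rel_head
            refine (mem_target_cons I D pay n₀' m p).2 ⟨⟨hxI, hxD⟩, ?_⟩
            rintro ⟨⟨t, ht⟩, hall⟩
            have ht' := Finset.mem_inter.1 (target_subset_s6 I D pay m p ht)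
            have htnD : t ∉ D n₀' :=
              fun h => (hdisj n₀' m hmne).forall_ne_finset h ht'.2 rfl
            exact absurd (hall t ht) (not_lt.2 (hxdom t ht'.1 htnD).le)
    · -- all of I sits inside D n₀'
      push_neg at hA
      have hsub : ∀ x ∈ I, x ∈ D n₀' := by
        intro x hxI
        obtain ⟨c, hcF, hxc⟩ := hcov x hxI
        by_cases h : c = n₀'
        · exact h ▸ hxc
        · have := hA c hcF h
          exact absurd (Finset.mem_inter.2 ⟨hxI, hxc⟩)
            (this ▸ Finset.notMem_empty x)
      have heq : n₀' = n₀ := by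
        by_contra hc
        exact (hdisj n₀' n₀ hc).forall_ne_finset (hsub om homI) homD rfl
      subst heq
      have hBI : B = I := by
        ext x
        simp only [hB, Finset.mem_filter]
        exact ⟨fun h => h.1, fun h => ⟨h, hsub x h, fun o'' ho'' hD =>
          absurd (hsub o'' ho'') hD⟩⟩
      have hIDn : I ∩ D n₀' = I := by
        ext x
        rw [Finset.mem_inter]
        exact ⟨fun h => h.1, fun h => ⟨h, hsub x h⟩⟩
      rw [hBI]
      cases rest' with
      | nil => rw [target_single, hIDn]
      | cons m p =>
          have hmne : n₀' ≠ m := hval.2.2.rel_head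
          have hTempty : target I D pay (m :: p) = ∅ := by
            rw [Finset.eq_empty_iff_forall_notMem]
            intro t ht
            have ht' := Finset.mem_inter.1 (target_subset_s6 I D pay m p ht)
            exact (hdisj n₀' m hmne).forall_ne_finset (hsub t ht'.1) ht'.2 rfl
          rw [target_cons, hTempty]
          simp [hIDn]
  exact ⟨n₀, rest, hvalid, hempty, fun n₀' rest' hv hp => by
    rw [key n₀' rest' hv hp, key n₀ rest hvalid hempty]⟩
end

section
/- In the PPE construction's iterative best-class procedure, the worst payoffs of the sequence of best Newcombian Classes of increasing order are strictly increasing: if the best class of order k does not yet discard all outcomes in sibling subtrees, then the best class of order k+1 has a strictly greater worst payoff. Consequently, since outcomes are finite, the procedure terminates. -/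
open Classical

lemma target_subset_head {O C : Type*} [Fintype O] [DecidableEq O] [DecidableEq C]
    (I : Finset O) (D : C → Finset O) (pay : O → ℤ) (n : C) (p : List C) :
    target I D pay (n :: p) ⊆ I ∩ D n := by
  cases p with
  | nil => simp [target]
  | cons m q => simpa [target] using Finset.filter_subset _ _

lemma wp_mem {O C : Type*} [Fintype O] [DecidableEq O] [DecidableEq C]
    (I : Finset O) (D : C → Finset O) (pay : O → ℤ) (η : List C)
    (h : (target I D pay η).Nonempty) :
    wp I D pay η ∈ pay '' (target I D pay η : Set O) := by
  apply Set.Nonempty.csInf_mem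
  · exact Set.Nonempty.image _ (by exact_mod_cast h)
  · exact (Finset.finite_toSet _).image _

/-- the worst payoffs of the best Newcombian Classes of increasing
order strictly increase: a non-degenerate state `(n, p)` has a strictly greater
worst payoff than `p`. Consequently, since outcomes are finite, the iterative
best-class procedure terminates: there is no infinite sequence of Newcombian
States with strictly increasing worst payoffs. -/
theorem best_class_worst_payoff_increases_and_terminates
    {O C : Type*} [Fintype O] [DecidableEq O] [DecidableEq C]
    (I : Finset O) (D : C → Finset O) (pay : O → ℤ) (F : Finset C)
    (hI : I.Nonempty)
    (hcov : ∀ o ∈ I, ∃ c ∈ F, o ∈ D c)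
    (hdisj : ∀ c c' : C, c ≠ c' → Disjoint (D c) (D c'))
    (hpay : Function.Injective pay) :
    (∀ (n : C) (p : List C), ValidState F (n :: p) → p ≠ [] →
      (target I D pay p).Nonempty → (target I D pay (n :: p)).Nonempty →
      wp I D pay p < wp I D pay (n :: p)) ∧
    (∀ f : ℕ → List C,
      (∀ k, ValidState F (f k) ∧ (target I D pay (f k)).Nonempty) →
      ¬ (∀ k, wp I D pay (f k) < wp I D pay (f (k + 1)))) := by
  have main : ∀ (n : C) (p : List C), ValidState F (n :: p) → p ≠ [] →
      (target I D pay p).Nonempty → (target I D pay (n :: p)).Nonempty →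
      wp I D pay p < wp I D pay (n :: p) := by
    rintro n p ⟨-, -, hchain⟩ hp hTp hTnp
    obtain ⟨m, q, rfl⟩ := List.exists_cons_of_ne_nil hp
    have hnm : n ≠ m := (List.isChain_cons_cons.mp hchain).1
    -- the worst payoff of (n :: m :: q) is attained by some o
    obtain ⟨o, ho, hoeq⟩ := wp_mem I D pay (n :: m :: q) hTnp
    have ho' : o ∈ target I D pay (n :: m :: q) := by exact_mod_cast ho
    have hofilt := ho'
    simp only [target, Finset.mem_filter] at hofilt
    obtain ⟨hoI, hcond⟩ := hofilt
    -- there is o' ∈ target (m :: q) with pay o' ≤ pay o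
    have : ∃ o' ∈ target I D pay (m :: q), ¬ pay o < pay o' := by
      by_contra h
      push_neg at h
      exact hcond ⟨hTp, h⟩
    obtain ⟨o', ho'mem, hle⟩ := this
    push_neg at hle
    -- o ∈ D n, o' ∈ D m, disjoint, so o ≠ o'
    have hone : o ≠ o' := by
      rintro rfl
      have h1 : o ∈ D n := (Finset.mem_inter.mp hoI).2
      have h2 : o ∈ D m :=
        (Finset.mem_inter.mp (target_subset_head I D pay m q ho'mem)).2
      have := (hdisj n m hnm).le_bot (show o ∈ D n ⊓ D m by simp [h1, h2])
      simp at this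
    have hlt : pay o' < pay o := lt_of_le_of_ne hle (fun h => hone (hpay h).symm)
    have hwp : wp I D pay (m :: q) ≤ pay o' := by
      apply csInf_le
      · exact ((Finset.finite_toSet _).image _).bddBelow
      · exact ⟨o', by exact_mod_cast ho'mem, rfl⟩
    calc wp I D pay (m :: q) ≤ pay o' := hwp
      _ < pay o := hlt
      _ = wp I D pay (n :: m :: q) := hoeq
  refine ⟨main, ?_⟩
  intro f hf hmono
  set g : ℕ → ℤ := fun k => wp I D pay (f k) with hg
  have hgmono : StrictMono g := strictMono_nat_of_lt_succ hmono
  have hrange : Set.range g ⊆ pay '' (I : Set O) := by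
    rintro x ⟨k, rfl⟩
    obtain ⟨hv, hne⟩ := hf k
    obtain ⟨o, ho, hoeq⟩ := wp_mem I D pay (f k) hne
    obtain ⟨m, q, hfq⟩ := List.exists_cons_of_ne_nil hv.1
    have hoI : o ∈ (I : Set O) := by
      have := target_subset_head I D pay m q (show o ∈ target I D pay (m::q) by rw [← hfq]; exact_mod_cast ho)
      exact_mod_cast (Finset.mem_inter.mp this).1
    exact ⟨o, hoI, hoeq⟩
  exact absurd ((Set.Finite.image _ (Finset.finite_toSet I)).subset hrange)
    (Set.infinite_range_of_injective hgmono.injective)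
end

section
/- At any step of the PPE construction, the set of outcomes remaining after all discardings equals the target set of the best Newcombian Class η*, and the next move equals the pure part of η*. In particular the two characterizations of the player's move (via the unique child containing all non-discarded outcomes, and via the pure part of the best class) coincide. -/
open Classical

theorem target_head_subset
    {O C : Type*} [Fintype O] [DecidableEq O]
    (I : Finset O) (D : C → Finset O) (pay : O → ℤ) (n : C) (p : List C) :
    target I D pay (n :: p) ⊆ I ∩ D n := by
  cases p with
  | nil => simp [target]
  | cons m q => rw [target]; exact Finset.filter_subset _ _


/-- the set of outcomes remaining after all discardings equals the
target set of the best Newcombian Class η*, and the next move is the pure part of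
η*: in particular all surviving outcomes lie in the subtree of `pure η*`, so the
two characterizations of the player's move coincide. -/
theorem survivors_eq_target_of_best_class
    {O C : Type*} [Fintype O] [DecidableEq O] [DecidableEq C]
    (I : Finset O) (D : C → Finset O) (pay : O → ℤ) (F : Finset C)
    (hI : I.Nonempty)
    (hcov : ∀ o ∈ I, ∃ c ∈ F, o ∈ D c)
    (hdisj : ∀ c c' : C, c ≠ c' → Disjoint (D c) (D c'))
    (hpay : Function.Injective pay)
    (n₀ : C) (rest : List C) (hv : ValidState F (n₀ :: rest))
    (hbest : ∀ n ∈ F, n ≠ n₀ → target I D pay (n :: n₀ :: rest) = ∅) :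
    survivors I D pay F = target I D pay (n₀ :: rest) ∧
    survivors I D pay F ⊆ D n₀ := by
  
  -- abbreviation for the best target set
  set T := target I D pay (n₀ :: rest) with hT
  obtain ⟨-, hmem, hchain⟩ := hv
  -- consequence of `hbest`, in pointwise form
  have hbest' : ∀ n ∈ F, n ≠ n₀ → ∀ o ∈ I, o ∈ D n →
      T.Nonempty ∧ ∀ o' ∈ T, pay o < pay o' := by
    intro n hnF hne o hoI hoD
    have h := hbest n hnF hne
    rw [target] at h
    rw [Finset.filter_eq_empty_iff] at h
    have := h (Finset.mem_inter.mpr ⟨hoI, hoD⟩)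
    simpa using this
  -- the best target set is nonempty
  have hTne : T.Nonempty := by
    obtain ⟨o, hoI⟩ := hI
    obtain ⟨c, hcF, hoD⟩ := hcov o hoI
    by_cases hc : c = n₀
    · subst hc
      cases rest with
      | nil =>
        exact ⟨o, by simpa [hT, target] using Finset.mem_inter.mpr ⟨hoI, hoD⟩⟩
      | cons m q =>
        by_contra hTe
        have hoT : o ∉ T := fun h => hTe ⟨o, h⟩
        rw [hT, target] at hoT
        have hcond : (target I D pay (m :: q)).Nonempty ∧
            ∀ o' ∈ target I D pay (m :: q), pay o < pay o' := by
          by_contra h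
          exact hoT (Finset.mem_filter.mpr ⟨Finset.mem_inter.mpr ⟨hoI, hoD⟩, h⟩)
        obtain ⟨⟨o', ho'⟩, -⟩ := hcond
        have ho'ID := target_head_subset I D pay m q ho'
        rw [Finset.mem_inter] at ho'ID
        have hmF : m ∈ F := hmem m (by simp)
        have hmne : m ≠ c := by
          have := List.isChain_cons_cons.mp hchain
          exact fun h => this.1 h.symm
        exact hTe (hbest' m hmF hmne o' ho'ID.1 ho'ID.2).1
    · exact (hbest' c hcF hc o hoI hoD).1
  -- survivors lie in I ∩ D n₀
  have hsub : survivors I D pay F ⊆ I ∩ D n₀ := by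
    intro o ho
    rw [survivors, Finset.mem_filter] at ho
    obtain ⟨hoI, hnd⟩ := ho
    refine Finset.mem_inter.mpr ⟨hoI, ?_⟩
    by_contra hoD
    obtain ⟨c, hcF, hoDc⟩ := hcov o hoI
    have hcne : c ≠ n₀ := fun h => hoD (h ▸ hoDc)
    obtain ⟨hne, hlt⟩ := hbest' c hcF hcne o hoI hoDc
    exact hnd ⟨n₀, rest, ⟨by simp, hmem, hchain⟩, hoI, hoD, hne, hlt⟩
  have heq : survivors I D pay F = T := by
    apply Finset.Subset.antisymm
    · intro o ho
      have hoID := hsub ho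
      rw [Finset.mem_inter] at hoID
      rw [survivors, Finset.mem_filter] at ho
      cases rest with
      | nil => rw [hT, target]; exact Finset.mem_inter.mpr hoID
      | cons m q =>
        rw [hT, target, Finset.mem_filter]
        refine ⟨Finset.mem_inter.mpr hoID, ?_⟩
        intro ⟨hpne, hplt⟩
        have hchain' := List.isChain_cons_cons.mp hchain
        have homD : o ∉ D m := by
          intro h
          exact Finset.disjoint_left.mp (hdisj n₀ m hchain'.1) hoID.2 h
        exact ho.2 ⟨m, q, ⟨by simp, fun x hx => hmem x (List.mem_cons_of_mem _ hx),
          hchain'.2⟩, hoID.1, homD, hpne, hplt⟩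
    · intro o hoT
      have hoID := target_head_subset I D pay n₀ rest hoT
      rw [Finset.mem_inter] at hoID
      rw [survivors, Finset.mem_filter]
      refine ⟨hoID.1, ?_⟩
      rintro ⟨n, p, ⟨-, hmem', -⟩, hoI, hoDn, ⟨o₁, ho₁⟩, hlt⟩
      have ho₁ID := target_head_subset I D pay n p ho₁
      rw [Finset.mem_inter] at ho₁ID
      have hnne : n ≠ n₀ := fun h => hoDn (h ▸ hoID.2)
      have h1 := (hbest' n (hmem' n (by simp)) hnne o₁ ho₁ID.1 ho₁ID.2).2 o hoT
      have h2 := hlt o₁ ho₁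
      omega
  exact ⟨heq, fun o ho => (Finset.mem_inter.mp (hsub ho)).2⟩
end

section
/- Every nonempty finite game tree with strict preferences has exactly one maximal reaction path: a unique maximal path (r₀,…,r_l) starting at the root such that for each i > 0, every outcome descending from r_i is strictly better, for the player at r_{i-1}, than every outcome descending from each sibling of r_i. -/
open Classical

/-- A Second-Principle move: the player moves to a child whose subtree strictly
dominates (for her) all sibling subtrees. -/
inductive SecondPrincipleStep : GameTree → GameTree → Prop
  | node (pl : Bool) (ts : List GameTree) (t : GameTree) (ht : t ∈ ts)
      (hdom : ∀ s ∈ ts, s ≠ t → ∀ o ∈ t.outcomes, ∀ o' ∈ s.outcomes,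
        GameTree.payOf pl o' < GameTree.payOf pl o) :
      SecondPrincipleStep (.node pl ts) t

/-- A maximal reaction path: a path starting at the root, following
Second-Principle moves, that cannot be extended. -/
def IsMaxReactionPath (g : GameTree) (R : List GameTree) : Prop :=
  R.head? = some g ∧ R.Chain' SecondPrincipleStep ∧
    ∀ t, R.getLast? = some t → ¬ ∃ s, SecondPrincipleStep t s

lemma wf_child {pl : Bool} {ts : List GameTree} {t : GameTree}
    (h : (GameTree.node pl ts).WellFormed) (ht : t ∈ ts) : t.WellFormed := by
  rw [GameTree.WellFormed] at h
  exact h.2 ⟨t, ht⟩ (List.mem_attach _ _)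

lemma outcomes_ne_nil_aux : ∀ n (g : GameTree), sizeOf g ≤ n → g.WellFormed →
    ∃ o, o ∈ g.outcomes := by
  intro n
  induction n with
  | zero =>
    intro g hg _
    cases g <;> simp only [GameTree.leaf.sizeOf_spec, GameTree.node.sizeOf_spec] at hg <;> omega
  | succ n ih =>
    intro g hg hwf
    cases g with
    | leaf p m => exact ⟨(p, m), by simp [GameTree.outcomes]⟩
    | node pl ts =>
      rw [GameTree.WellFormed] at hwf
      obtain ⟨t, ht⟩ := List.exists_mem_of_ne_nil ts hwf.1
      have hst : sizeOf t < sizeOf (GameTree.node pl ts) := by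
        have := List.sizeOf_lt_of_mem ht
        simp only [GameTree.node.sizeOf_spec]; omega
      obtain ⟨o, ho⟩ := ih t (by omega) (hwf.2 ⟨t, ht⟩ (List.mem_attach _ _))
      refine ⟨o, ?_⟩
      rw [GameTree.outcomes]
      exact List.mem_flatMap.2 ⟨⟨t, ht⟩, List.mem_attach _ _, ho⟩

lemma outcomes_nonempty (g : GameTree) (hwf : g.WellFormed) : ∃ o, o ∈ g.outcomes :=
  outcomes_ne_nil_aux (sizeOf g) g le_rfl hwf

lemma step_unique {g t t' : GameTree} (hwf : g.WellFormed)
    (h1 : SecondPrincipleStep g t) (h2 : SecondPrincipleStep g t') : t = t' := by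
  cases h1 with
  | node pl ts t ht hdom =>
    cases h2 with
    | node _ _ t' ht' hdom' =>
      by_contra hne
      obtain ⟨o, ho⟩ := outcomes_nonempty t (wf_child hwf ht)
      obtain ⟨o', ho'⟩ := outcomes_nonempty t' (wf_child hwf ht')
      have := hdom t' ht' (fun h => hne h.symm) o ho o' ho'
      have := hdom' t ht hne o' ho' o ho
      omega

lemma step_wf {g t : GameTree} (hwf : g.WellFormed)
    (h : SecondPrincipleStep g t) : t.WellFormed := by
  cases h with
  | node pl ts t ht hdom => exact wf_child hwf ht

lemma main_aux : ∀ n (g : GameTree), sizeOf g ≤ n → g.WellFormed →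
    ∃! R : List GameTree, IsMaxReactionPath g R := by
  intro n
  induction n with
  | zero =>
    intro g hg _
    cases g <;> simp only [GameTree.leaf.sizeOf_spec, GameTree.node.sizeOf_spec] at hg <;> omega
  | succ n ih =>
    intro g hg hwf
    by_cases hstep : ∃ s, SecondPrincipleStep g s
    · obtain ⟨s, hs⟩ := hstep
      have hss : sizeOf s < sizeOf g := by
        cases hs with
        | node pl ts t ht hdom =>
          have := List.sizeOf_lt_of_mem ht
          simp only [GameTree.node.sizeOf_spec]; omega
      obtain ⟨R', ⟨hh', hc', hm'⟩, huniq'⟩ := ih s (by omega) (step_wf hwf hs)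
      obtain ⟨R'', hR'⟩ := List.head?_eq_some_iff.1 hh'
      refine ⟨g :: R', ⟨?_, ?_, ?_⟩, ?_⟩
      · rfl
      · rw [hR']
        exact List.isChain_cons_cons.2 ⟨hs, hR' ▸ hc'⟩
      · intro t htl
        rw [hR', List.getLast?_cons_cons, ← hR'] at htl
        exact hm' t htl
      · rintro R ⟨hh, hc, hm⟩
        obtain ⟨tl, hR⟩ := List.head?_eq_some_iff.1 hh
        subst hR
        cases tl with
        | nil =>
          exact absurd ⟨s, hs⟩ (hm g (by simp))
        | cons x l =>
          have hgx : SecondPrincipleStep g x := (List.isChain_cons_cons.1 hc).1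
          have hxs : x = s := step_unique hwf hgx hs
          subst hxs
          have : x :: l = R' := by
            refine huniq' (x :: l) ⟨rfl, (List.isChain_cons_cons.1 hc).2, ?_⟩
            intro t htl
            exact hm t (by rwa [List.getLast?_cons_cons])
          rw [this]
    · refine ⟨[g], ⟨rfl, List.isChain_singleton g, ?_⟩, ?_⟩
      · intro t htl
        simp only [List.getLast?_singleton, Option.some.injEq] at htl
        subst htl; exact hstep
      · rintro R ⟨hh, hc, hm⟩
        obtain ⟨tl, hR⟩ := List.head?_eq_some_iff.1 hh
        subst hR
        cases tl with
        | nil => rfl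
        | cons x l => exact absurd ⟨x, (List.isChain_cons_cons.1 hc).1⟩ hstep

/-- every nonempty finite game tree with strict preferences has
exactly one maximal reaction path. -/
theorem reaction_path_exists_unique (g : GameTree) (hwf : g.WellFormed)
    (hsp : g.StrictPref) :
    ∃! R : List GameTree, IsMaxReactionPath g R := by
  exact main_aux (sizeOf g) g le_rfl hwf
end

section
/- In a biped game where Peter's payoffs are a = 1, b = 0, c = 2 and Mary prefers outcome 2 to outcome 3 (e > f), the SPE reaches outcome 1 (payoffs (1, d)) while the PPE reaches outcome 3 (payoffs (2, f)); thus the SPE and PPE differ exactly in this preference configuration among the 18 biped games (up to symmetry, 3 of 18 games yield different equilibria). -/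
open Classical

/-- A biped game: Peter at the root chooses between outcome 1 = (a,d) and a node
at which Mary chooses between outcome 2 = (b,e) and outcome 3 = (c,f). -/
def biped (a b c d e f : ℤ) : GameTree :=
  .node true [.leaf a d, .node false [.leaf b e, .leaf c f]]

private lemma target_subset_s13 (pay : ℤ × ℤ → ℤ) (I : Finset (ℤ × ℤ)) :
    ∀ η : List GameTree, GameTree.target pay I η ⊆ I
  | [] => by simp [GameTree.target]
  | [t] => by
      simp only [GameTree.target]; exact Finset.inter_subset_left
  | t :: u :: p => by
      simp only [GameTree.target]
      exact (Finset.filter_subset _ _).trans Finset.inter_subset_left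

/-- in a biped game with Peter's payoffs a = 1, b = 0, c = 2 and
Mary preferring outcome 2 to outcome 3 (e > f), the SPE reaches outcome 1 with
payoffs (1,d) while the PPE reaches outcome 3 with payoffs (2,f); in particular
the two equilibria differ. -/
theorem biped_case_one_ne (d e f : ℤ)
    (hmem : d ∈ ({0, 1, 2} : Set ℤ) ∧ e ∈ ({0, 1, 2} : Set ℤ) ∧
      f ∈ ({0, 1, 2} : Set ℤ))
    (hMary : d ≠ e ∧ d ≠ f ∧ e ≠ f) (hef : f < e) :
    (biped 1 0 2 d e f).biOutcome = (1, d) ∧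
    GameTree.PPEReach (biped 1 0 2 d e f)
      (biped 1 0 2 d e f).outcomes.toFinset (2, f) ∧
    ((1, d) : ℤ × ℤ) ≠ ((2, f) : ℤ × ℤ) := by
  have hout : (biped 1 0 2 d e f).outcomes = [(1,d),(0,e),(2,f)] := by
    simp [biped, GameTree.outcomes]
  refine ⟨?_, ?_, by simp⟩
  · simp [biped, GameTree.biOutcome, List.argmax, List.argAux, GameTree.payOf,
      not_lt.2 hef.le]
  set node2 : GameTree := .node false [.leaf 0 e, .leaf 2 f] with hnode2
  set I : Finset (ℤ × ℤ) := ([(1,d),(0,e),(2,f)] : List (ℤ × ℤ)).toFinset with hI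
  have houtn2 : node2.outcomes = [(0,e),(2,f)] := by
    simp [hnode2, GameTree.outcomes]
  have hfstle : ∀ x ∈ I, x.1 ≤ 2 := by
    intro x hx
    simp only [hI, List.toFinset_cons, List.toFinset_nil, insert_empty_eq,
      Finset.mem_insert, Finset.mem_singleton] at hx
    rcases hx with rfl | rfl | rfl <;> norm_num
  have hTp : I ∩ ({(1,d)} : Finset (ℤ × ℤ)) = {(1,d)} :=
    Finset.inter_eq_right.mpr (by simp [hI])
  -- target of the singleton state [leaf 1 d]
  have hT1 : GameTree.target (GameTree.payOf true) I [.leaf 1 d]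
      = ({((1:ℤ),d)} : Finset (ℤ × ℤ)) := by
    simp only [GameTree.target, GameTree.outcomes]
    simpa using hTp
  -- target of the state [node2, leaf 1 d]
  have hT2 : GameTree.target (GameTree.payOf true) I [node2, .leaf 1 d]
      = ({((2:ℤ),f)} : Finset (ℤ × ℤ)) := by
    ext x
    simp only [GameTree.target, houtn2, GameTree.outcomes, GameTree.payOf,
      Finset.mem_filter, Finset.mem_inter, List.mem_toFinset, List.mem_cons,
      List.mem_singleton, List.not_mem_nil, or_false, Finset.mem_singleton,
      if_true]
    constructor
    · rintro ⟨⟨hxI, hx⟩, hcond⟩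
      rcases hx with rfl | rfl
      · exfalso
        apply hcond
        refine ⟨⟨(1,d), Finset.mem_inter.2 ⟨by simp [hI], by simp⟩⟩, ?_⟩
        rintro o' ⟨-, rfl⟩
        norm_num
      · rfl
    · rintro rfl
      refine ⟨⟨by simp [hI], Or.inr rfl⟩, ?_⟩
      rintro ⟨-, hforall⟩
      have := hforall (1,d) ⟨by simp [hI], rfl⟩
      norm_num at this
  -- (0,e) is discarded at the root
  have hD0 : GameTree.Discards (GameTree.payOf true) [.leaf 1 d, node2] I (0,e) := by
    refine ⟨[.leaf 1 d], by simp, by simp, by simp [List.Chain'], by simp [hI], ?_, ?_, ?_⟩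
    · intro t ht
      simp only [List.head?_cons, Option.mem_some_iff] at ht
      subst ht
      simp [GameTree.outcomes]
    · rw [hT1]; exact Finset.singleton_nonempty _
    · intro o' ho'
      rw [hT1, Finset.mem_singleton] at ho'
      subst ho'
      simp [GameTree.payOf]
  -- (1,d) is discarded at the root
  have hD1 : GameTree.Discards (GameTree.payOf true) [.leaf 1 d, node2] I (1,d) := by
    refine ⟨[node2, .leaf 1 d], by simp, by simp, ?_, by simp [hI], ?_, ?_, ?_⟩
    · simp [hnode2, List.Chain']
    · intro t ht
      simp only [List.head?_cons, Option.mem_some_iff] at ht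
      subst ht
      simp [houtn2]
    · rw [hT2]; exact Finset.singleton_nonempty _
    · intro o' ho'
      rw [hT2, Finset.mem_singleton] at ho'
      subst ho'
      simp [GameTree.payOf]
  -- (2,f) is not discarded at the root
  have hND2 : ¬ GameTree.Discards (GameTree.payOf true) [.leaf 1 d, node2] I (2,f) := by
    rintro ⟨η, -, -, -, -, -, ⟨o', ho'⟩, hall⟩
    have h1 : o' ∈ I := target_subset_s13 _ _ _ ho'
    have h2 := hall o' ho'
    have h3 := hfstle o' h1
    simp only [GameTree.payOf, if_pos] at h2
    omega
  -- survivors at the root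
  have hS : GameTree.survivors (GameTree.payOf true) [.leaf 1 d, node2] I
      = ({((2:ℤ),f)} : Finset (ℤ × ℤ)) := by
    ext x
    simp only [GameTree.survivors, Finset.mem_filter, Finset.mem_singleton]
    constructor
    · rintro ⟨hxI, hnd⟩
      have hx : x = (1,d) ∨ x = (0,e) ∨ x = (2,f) := by
        simpa [hI] using hxI
      rcases hx with rfl | rfl | rfl
      · exact absurd hD1 hnd
      · exact absurd hD0 hnd
      · rfl
    · rintro rfl
      exact ⟨by simp [hI], hND2⟩
  -- survivors at node 2
  have hS2 : GameTree.survivors (GameTree.payOf false) [.leaf 0 e, .leaf 2 f]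
      ({((2:ℤ),f)} : Finset (ℤ × ℤ)) = {((2:ℤ),f)} := by
    ext x
    simp only [GameTree.survivors, Finset.mem_filter, Finset.mem_singleton]
    constructor
    · rintro ⟨hx, -⟩; exact hx
    · rintro rfl
      refine ⟨rfl, ?_⟩
      rintro ⟨η, -, -, -, -, -, ⟨o', ho'⟩, hall⟩
      have h1 : o' ∈ ({((2:ℤ),f)} : Finset (ℤ × ℤ)) := target_subset_s13 _ _ _ ho'
      rw [Finset.mem_singleton] at h1
      subst h1
      have h2 := hall _ ho'
      simp [GameTree.payOf] at h2
  rw [hout]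
  show GameTree.PPEReach (.node true [.leaf 1 d, node2]) I (2,f)
  refine GameTree.PPEReach.node true _ I node2 (2,f) (by simp) ?_ ?_
  · rw [hS]
    intro x hx
    rw [Finset.mem_singleton] at hx
    subst hx
    simp [houtn2]
  · rw [hS, hnode2]
    refine GameTree.PPEReach.node false _ _ (.leaf 2 f) (2,f) (by simp) ?_ ?_
    · rw [hS2]
      intro x hx
      rw [Finset.mem_singleton] at hx
      subst hx
      simp [GameTree.outcomes]
    · rw [hS2]
      exact GameTree.PPEReach.leaf 2 f _ (by simp)
end

section
/- In the Take-or-Leave game with n dollars (n odd) and strictly increasing payoffs for both players along the game, the PPE is the path where both players always Leave until the final outcome, which is reached; in particular, the PPE outcome is the last leaf of the caterpillar tree and is Pareto-optimal, whereas backward induction yields the first Take outcome. -/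
open Classical

/-- An invertible ("caterpillar") tree: every internal node has one Take leaf
and one remaining subtree. -/
inductive CatTree where
  | last (pP pM : ℤ) : CatTree
  | node (player : Bool) (takeP takeM : ℤ) (rest : CatTree) : CatTree

namespace CatTree

/-- The game tree corresponding to an invertible tree. -/
def toGame : CatTree → GameTree
  | .last p m => .leaf p m
  | .node pl tp tm r => .node pl [.leaf tp tm, r.toGame]

/-- Players alternate along an invertible tree. -/
def Alternating : CatTree → Prop
  | .last _ _ => True
  | .node _ _ _ (.last _ _) => True
  | .node pl _ _ (.node pl' a b r) => pl' = !pl ∧ Alternating (.node pl' a b r)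

/-- The simplified PPE procedure for invertible trees: at each node, if the Take
outcome is better for the current player than all remaining outcomes in the
Leave subtree, stop with the Take outcome; otherwise Leave, discard all
remaining future outcomes worse than the Take outcome (the Take outcome itself
being discarded), and recurse. -/
noncomputable def simpleOutcome : CatTree → Finset (ℤ × ℤ) → Option (ℤ × ℤ)
  | .last p m, _ => some (p, m)
  | .node pl tp tm r, I =>
      if ∀ o ∈ I ∩ r.toGame.outcomes.toFinset,
          GameTree.payOf pl o < GameTree.payOf pl (tp, tm)
      then some (tp, tm)
      else simpleOutcome r ((I ∩ r.toGame.outcomes.toFinset).filter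
        (fun o => GameTree.payOf pl (tp, tm) < GameTree.payOf pl o))

end CatTree

/-- Payoffs of the j-th leaf of the Take-or-Leave game (leaves numbered from 1):
the taking player gets j, the other player gets j - 2; both players' payoffs
strictly increase along their own later takes. -/
def payoffPair (j : ℕ) : ℤ × ℤ :=
  if j % 2 = 1 then ((j : ℤ), (j : ℤ) - 2) else ((j : ℤ) - 2, (j : ℤ))

/-- The Take-or-Leave caterpillar starting at leaf index j with k decision
nodes remaining (players alternate, odd indices are Peter's). -/
def tolAux : ℕ → ℕ → CatTree
  | j, 0 => .last (payoffPair j).1 (payoffPair j).2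
  | j, k + 1 => .node (j % 2 = 1) (payoffPair j).1 (payoffPair j).2
      (tolAux (j + 1) k)

/-- The Take-or-Leave game with n dollars (n odd): n + 1 decision nodes, final
leaf at index n + 2 with payoffs (n + 2, n). -/
def tol (n : ℕ) : CatTree := tolAux 1 (n + 1)

lemma outcomes_node2 (pl : Bool) (a b : GameTree) :
    (GameTree.node pl [a, b]).outcomes = a.outcomes ++ b.outcomes := by
  rw [GameTree.outcomes]
  simp

lemma payoffPair_inj : Function.Injective payoffPair := by
  intro a b h
  have : (payoffPair a).1 + (payoffPair a).2 = (payoffPair b).1 + (payoffPair b).2 := by rw [h]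
  simp only [payoffPair] at this
  split at this <;> split at this <;> push_cast at this <;> omega

lemma outcomes_tolAux (j k : ℕ) :
    (tolAux j k).toGame.outcomes = (List.range (k+1)).map (fun i => payoffPair (j+i)) := by
  induction k generalizing j with
  | zero => simp [tolAux, CatTree.toGame, GameTree.outcomes, List.range_succ]
  | succ k ih =>
      rw [tolAux, CatTree.toGame, outcomes_node2, ih]
      conv_rhs => rw [List.range_succ_eq_map]
      rw [GameTree.outcomes]
      simp only [List.singleton_append, Nat.add_zero]
      congr 1
      rw [List.map_map]
      apply List.map_congr_left
      intro i _
      simp only [Function.comp_apply]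
      congr 1
      omega
lemma mem_out_iff (j k m : ℕ) :
    payoffPair m ∈ (tolAux j k).toGame.outcomes.toFinset ↔ j ≤ m ∧ m ≤ j + k := by
  simp only [outcomes_tolAux, List.mem_toFinset, List.mem_map, List.mem_range]
  constructor
  · rintro ⟨i, hi, he⟩
    have := payoffPair_inj he
    omega
  · rintro ⟨h1, h2⟩
    exact ⟨m - j, by omega, by congr 1; omega⟩

lemma exists_of_mem_out {j k : ℕ} {o : ℤ × ℤ}
    (h : o ∈ (tolAux j k).toGame.outcomes.toFinset) :
    ∃ m, j ≤ m ∧ m ≤ j + k ∧ o = payoffPair m := by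
  simp only [outcomes_tolAux, List.mem_toFinset, List.mem_map, List.mem_range] at h
  obtain ⟨i, hi, he⟩ := h
  exact ⟨j + i, by omega, by omega, he.symm⟩

lemma pay_pp (j m : ℕ) :
    GameTree.payOf (decide (j % 2 = 1)) (payoffPair m) =
      if m % 2 = j % 2 then (m : ℤ) else (m : ℤ) - 2 := by
  rcases Nat.mod_two_eq_zero_or_one j with hj | hj <;>
    rcases Nat.mod_two_eq_zero_or_one m with hm | hm <;>
      simp [GameTree.payOf, payoffPair, hj, hm]

lemma leaf_out_toFinset (j : ℕ) :
    (GameTree.leaf (payoffPair j).1 (payoffPair j).2).outcomes.toFinset = {payoffPair j} := by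
  simp [GameTree.outcomes]

lemma target_head_subset_s18 (pay : ℤ × ℤ → ℤ) (I : Finset (ℤ × ℤ)) (t : GameTree)
    (p : List GameTree) :
    GameTree.target pay I (t :: p) ⊆ I ∩ t.outcomes.toFinset := by
  cases p with
  | nil => rw [GameTree.target]
  | cons u p => rw [GameTree.target]; exact Finset.filter_subset _ _

lemma not_discarded {pay : ℤ × ℤ → ℤ} {L R : GameTree} {I : Finset (ℤ × ℤ)} {o : ℤ × ℤ}
    (hoR : o ∈ R.outcomes.toFinset)
    (hL : ∀ o' ∈ I ∩ L.outcomes.toFinset, ¬ pay o < pay o') :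
    ¬ GameTree.Discards pay [L, R] I o := by
  rintro ⟨η, hne, hmem, -, -, hhead, ⟨w, hw⟩, hlt⟩
  cases η with
  | nil => exact hne rfl
  | cons t rest =>
    have ht : t ∈ [L, R] := hmem t List.mem_cons_self
    have hw' := target_head_subset_s18 pay I t rest hw
    rcases List.mem_pair.mp ht with rfl | rfl
    · exact hL w hw' (hlt w hw)
    · exact hhead t rfl hoR
lemma survivors_pass (j k : ℕ) (pay : ℤ × ℤ → ℤ) :
    GameTree.survivors pay
      [GameTree.leaf (payoffPair j).1 (payoffPair j).2, (tolAux (j+1) k).toGame]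
      ((tolAux (j+1) k).toGame.outcomes.toFinset)
    = (tolAux (j+1) k).toGame.outcomes.toFinset := by
  rw [GameTree.survivors, Finset.filter_eq_self]
  intro o ho
  apply not_discarded ho
  intro o' ho' _
  rw [leaf_out_toFinset, Finset.mem_inter, Finset.mem_singleton] at ho'
  obtain ⟨h1, rfl⟩ := ho'
  rw [mem_out_iff] at h1
  omega
lemma survivors_odd (j k : ℕ) (hj : j % 2 = 1) :
    GameTree.survivors (GameTree.payOf (decide (j % 2 = 1)))
      [GameTree.leaf (payoffPair j).1 (payoffPair j).2, (tolAux (j+1) (k+1)).toGame]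
      ((tolAux j (k+2)).toGame.outcomes.toFinset)
    = (tolAux (j+2) k).toGame.outcomes.toFinset := by
  set pay := GameTree.payOf (decide (j % 2 = 1)) with hpay
  set L := GameTree.leaf (payoffPair j).1 (payoffPair j).2 with hLdef
  set R := (tolAux (j+1) (k+1)).toGame with hRdef
  set I := (tolAux j (k+2)).toGame.outcomes.toFinset with hIdef
  have hpj : payoffPair j ∈ I := (mem_out_iff _ _ _).mpr ⟨le_refl _, by omega⟩
  have hpayj : pay (payoffPair j) = (j : ℤ) := by rw [hpay, pay_pp, if_pos rfl]
  have hT1 : GameTree.target pay I [L] = {payoffPair j} := by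
    rw [GameTree.target, hLdef, leaf_out_toFinset]
    exact Finset.inter_eq_right.mpr (Finset.singleton_subset_iff.mpr hpj)
  have hT2 : ∀ o', o' ∈ GameTree.target pay I [R, L] ↔
      o' ∈ I ∧ o' ∈ R.outcomes.toFinset ∧ ¬ pay o' < (j : ℤ) := by
    intro o'
    rw [GameTree.target]
    simp only [hT1, hpayj, Finset.mem_filter, Finset.mem_inter, Finset.singleton_nonempty,
      Finset.mem_singleton, true_and, forall_eq, and_assoc]
  ext o
  rw [GameTree.survivors, Finset.mem_filter]
  constructor
  · rintro ⟨ho, hnd⟩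
    obtain ⟨m, hm1, hm2, rfl⟩ := exists_of_mem_out (hIdef ▸ ho)
    rcases Nat.lt_or_ge m (j+2) with hmlt | hmge
    · exfalso
      apply hnd
      rcases Nat.eq_or_lt_of_le hm1 with hmj | hmj
      · -- m = j : discard via η = [R, L]
        subst hmj
        refine ⟨[R, L], by simp, ?_, ?_, ho, ?_, ?_, ?_⟩
        · intro t ht
          simp only [List.mem_cons, List.not_mem_nil, or_false] at ht ⊢
          tauto
        · refine List.isChain_pair.mpr ?_
          rw [hRdef, hLdef, tolAux, CatTree.toGame]
          simp
        · intro t ht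
          simp only [Option.mem_def, List.head?_cons, Option.some.injEq] at ht
          subst ht
          rw [hRdef, mem_out_iff]
          omega
        · refine ⟨payoffPair (j+2), (hT2 _).mpr ⟨?_, ?_, ?_⟩⟩
          · exact (mem_out_iff _ _ _).mpr ⟨by omega, by omega⟩
          · rw [hRdef]; exact (mem_out_iff _ _ _).mpr ⟨by omega, by omega⟩
          · rw [hpay, pay_pp, if_pos (by omega)]
            push_cast
            omega
        · intro o' ho'
          rw [hT2] at ho'
          obtain ⟨-, hoR, hge⟩ := ho'
          obtain ⟨m', h1, h2, rfl⟩ := exists_of_mem_out (hRdef ▸ hoR)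
          rw [hpayj, hpay, pay_pp]
          rw [hpay, pay_pp] at hge
          split_ifs at hge ⊢ with hpar <;> push_cast at hge ⊢ <;> omega
      · -- m = j+1 : discard via η = [L]
        have hmj1 : m = j + 1 := by omega
        subst hmj1
        refine ⟨[L], by simp, ?_, List.isChain_singleton _, ho, ?_, ?_, ?_⟩
        · intro t ht
          simp only [List.mem_cons, List.not_mem_nil, or_false] at ht
          simp [ht]
        · intro t ht
          simp only [Option.mem_def, List.head?_cons, Option.some.injEq] at ht
          subst ht
          rw [hLdef, leaf_out_toFinset, Finset.mem_singleton]
          intro h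
          have := payoffPair_inj h
          omega
        · rw [hT1]; exact ⟨_, Finset.mem_singleton_self _⟩
        · intro o' ho'
          rw [hT1, Finset.mem_singleton] at ho'
          subst ho'
          rw [hpayj, hpay, pay_pp, if_neg (by omega)]
          push_cast
          omega
    · exact (mem_out_iff _ _ _).mpr ⟨by omega, by omega⟩
  · intro ho
    obtain ⟨m, hm1, hm2, rfl⟩ := exists_of_mem_out ho
    refine ⟨(mem_out_iff _ _ _).mpr ⟨by omega, by omega⟩, ?_⟩
    apply not_discarded (R := R)
    · rw [hRdef]; exact (mem_out_iff _ _ _).mpr ⟨by omega, by omega⟩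
    · intro o' ho' hlt
      rw [hLdef, leaf_out_toFinset, Finset.mem_inter, Finset.mem_singleton] at ho'
      obtain ⟨-, rfl⟩ := ho'
      rw [hpayj, hpay, pay_pp] at hlt
      split_ifs at hlt with hpar
      · push_cast at hlt; omega
      · push_cast at hlt; omega
lemma ppe_aux (k : ℕ) : ∀ j, j % 2 = 1 → k % 2 = 0 →
    GameTree.PPEReach (tolAux j k).toGame (tolAux j k).toGame.outcomes.toFinset
      (payoffPair (j + k)) := by
  induction k using Nat.strong_induction_on with
  | _ k ih =>
    intro j hj hk
    obtain _ | _ | k := k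
    · exact GameTree.PPEReach.leaf _ _ _ ((mem_out_iff j 0 j).mpr ⟨le_refl _, by omega⟩)
    · omega
    · have htree : (tolAux j (k+2)).toGame =
          GameTree.node (decide (j % 2 = 1))
            [GameTree.leaf (payoffPair j).1 (payoffPair j).2,
              (tolAux (j+1) (k+1)).toGame] := rfl
      rw [htree]
      refine GameTree.PPEReach.node _ _ _ ((tolAux (j+1) (k+1)).toGame) _
        (by simp) ?_ ?_
      · rw [← htree, survivors_odd j k hj]
        intro o ho
        obtain ⟨m, h1, h2, rfl⟩ := exists_of_mem_out ho
        exact (mem_out_iff _ _ _).mpr ⟨by omega, by omega⟩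
      · rw [← htree, survivors_odd j k hj]
        have htree2 : (tolAux (j+1) (k+1)).toGame =
            GameTree.node (decide ((j+1) % 2 = 1))
              [GameTree.leaf (payoffPair (j+1)).1 (payoffPair (j+1)).2,
                (tolAux (j+2) k).toGame] := rfl
        rw [htree2]
        refine GameTree.PPEReach.node _ _ _ ((tolAux (j+2) k).toGame) _
          (by simp) ?_ ?_
        · rw [survivors_pass (j+1) k]
        · rw [survivors_pass (j+1) k]
          have e : j + (k + 2) = (j + 2) + k := by omega
          rw [e]
          exact ih k (by omega) (j+2) (by omega) (by omega)

lemma bi_tolAux (j k : ℕ) : (tolAux j k).toGame.biOutcome = payoffPair j := by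
  induction k generalizing j with
  | zero => rw [tolAux, CatTree.toGame, GameTree.biOutcome]
  | succ k ih =>
    rw [tolAux, CatTree.toGame, GameTree.biOutcome]
    have hmap : (([GameTree.leaf (payoffPair j).1 (payoffPair j).2,
        (tolAux (j+1) k).toGame] : List GameTree).attach.map
          (fun t => GameTree.biOutcome t.1)) =
        [GameTree.biOutcome (GameTree.leaf (payoffPair j).1 (payoffPair j).2),
          GameTree.biOutcome (tolAux (j+1) k).toGame] := by
      simp
    rw [hmap, ih, List.argmax_cons, List.argmax_singleton]
    have hL : GameTree.biOutcome (GameTree.leaf (payoffPair j).1 (payoffPair j).2)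
        = payoffPair j := by rw [GameTree.biOutcome]
    rw [hL]
    have hlt : ¬ GameTree.payOf (decide (j % 2 = 1)) (payoffPair j) <
        GameTree.payOf (decide (j % 2 = 1)) (payoffPair (j+1)) := by
      rw [pay_pp, pay_pp, if_pos rfl, if_neg (by omega)]
      push_cast
      omega
    simp [hlt]
/-- in the Take-or-Leave game (n odd) with strictly increasing
payoffs, the PPE reaches the final leaf of the caterpillar (both players always
Leave), this outcome is Pareto-optimal, whereas backward induction yields the
first Take outcome (1,-1). -/
theorem tol_ppe_reaches_last_leaf (n : ℕ) (hn : Odd n) :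
    GameTree.PPEReach (tol n).toGame (tol n).toGame.outcomes.toFinset
      ((n : ℤ) + 2, (n : ℤ)) ∧
    (tol n).toGame.biOutcome = (1, -1) ∧
    (∀ o ∈ (tol n).toGame.outcomes, ¬ ((n : ℤ) + 2 < o.1 ∧ (n : ℤ) < o.2)) := by
  obtain ⟨c, hc⟩ := hn
  refine ⟨?_, ?_, ?_⟩
  · have h := ppe_aux (n+1) 1 rfl (by omega)
    have e : payoffPair (1 + (n+1)) = ((n : ℤ) + 2, (n : ℤ)) := by
      rw [payoffPair, if_pos (by omega)]
      rw [Prod.mk.injEq]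
      constructor <;> push_cast <;> omega
    rw [e] at h
    exact h
  · rw [tol, bi_tolAux]
    norm_num [payoffPair]
  · intro o ho
    rw [tol, outcomes_tolAux] at ho
    simp only [List.mem_map, List.mem_range] at ho
    obtain ⟨i, hi, rfl⟩ := ho
    rw [payoffPair]
    split_ifs <;> rintro ⟨h1, h2⟩ <;> push_cast at h1 h2 <;> omega
end
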